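/- For every n ≥ 5, the signed graph Γ_n is unbalanced and contains no negative cycle of length 3 and no negative cycle of length 4; indeed, every negative cycle of Γ_n of minimum length has length 5. -/

import Mathlib

structure SignedGraph (V : Type*) where
  G : SimpleGraph V
  sign : V → V → ℤ
  sign_symm : ∀ u v, sign u v = sign v u
  sign_mem : ∀ u v, G.Adj u v → sign u v = 1 ∨ sign u v = -1
  sign_not : ∀ u v, ¬ G.Adj u v → sign u v = 0

namespace SignedGraph

variable {V : Type*}

/-- The adjacency matrix of a signed graph, over `ℝ`. -/
noncomputable def adjMatrix (Γ : SignedGraph V) : Matrix V V ℝ :=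
  fun u v => (Γ.sign u v : ℝ)

/-- The largest eigenvalue `λ₁` of a signed graph. -/
noncomputable def lambda1 (Γ : SignedGraph V) [Fintype V] : ℝ :=
  letI := Classical.decEq V
  sSup (spectrum ℝ Γ.adjMatrix)

/-- The smallest eigenvalue `λₙ` of a signed graph. -/
noncomputable def lambdaMin (Γ : SignedGraph V) [Fintype V] : ℝ :=
  letI := Classical.decEq V
  sInf (spectrum ℝ Γ.adjMatrix)

/-- The spectral radius `ρ = max {λ₁, -λₙ}` of a signed graph. -/
noncomputable def rho (Γ : SignedGraph V) [Fintype V] : ℝ :=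
  max Γ.lambda1 (-Γ.lambdaMin)

/-- The sign (product of edge signs) of a walk. -/
def walkSign (Γ : SignedGraph V) {G' : SimpleGraph V} : ∀ {u v : V}, G'.Walk u v → ℤ
  | _, _, .nil => 1
  | _, _, .cons (u := a) (v := b) _ p => Γ.sign a b * walkSign Γ p

/-- A signed graph is balanced if every cycle is positive. -/
def Balanced (Γ : SignedGraph V) : Prop :=
  ∀ (u : V) (w : Γ.G.Walk u u), w.IsCycle → Γ.walkSign w = 1

def Unbalanced (Γ : SignedGraph V) : Prop := ¬ Γ.Balanced

/-- `Γ` has a negative cycle of length `k`. -/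
def HasNegCycleOfLength (Γ : SignedGraph V) (k : ℕ) : Prop :=
  ∃ (u : V) (w : Γ.G.Walk u u), w.IsCycle ∧ Γ.walkSign w = -1 ∧ w.length = k

/-- Switching equivalence: same underlying graph and signs related by a switching function. -/
def SwitchingEquivalent (Γ Γ' : SignedGraph V) : Prop :=
  Γ.G = Γ'.G ∧ ∃ s : V → ℤ, (∀ v, s v = 1 ∨ s v = -1) ∧
    ∀ u v, Γ'.sign u v = s u * Γ.sign u v * s v

/-- Switching isomorphism. -/
def SwitchingIsomorphic {V' : Type*} (Γ : SignedGraph V) (Γ' : SignedGraph V') : Prop :=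
  ∃ (e : V ≃ V') (s : V → ℤ), (∀ v, s v = 1 ∨ s v = -1) ∧
    (∀ u v, Γ'.G.Adj (e u) (e v) ↔ Γ.G.Adj u v) ∧
    (∀ u v, Γ'.sign (e u) (e v) = s u * Γ.sign u v * s v)

/-- Build a signed graph from a symmetric sign function with values in `{0, 1, -1}`. -/
def ofSign (s : V → V → ℤ) (hsymm : ∀ u v, s u v = s v u)
    (hloop : ∀ v, s v v = 0)
    (hval : ∀ u v, s u v = 0 ∨ s u v = 1 ∨ s u v = -1) : SignedGraph V where
  G := { Adj := fun u v => s u v ≠ 0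
         symm := ⟨fun u v h => by
           show s v u ≠ 0
           rw [hsymm v u]; exact h⟩
         loopless := ⟨fun v h => h (hloop v)⟩ }
  sign := s
  sign_symm := hsymm
  sign_mem := fun u v h => (hval u v).resolve_left h
  sign_not := fun u v h => not_not.mp h

/-- Build a signed graph on `Fin n` from a sign function on ordered pairs of naturals. -/
def ofMinMaxAux (n : ℕ) (aux : ℕ → ℕ → ℤ) (h0 : ∀ a, aux a a = 0)
    (hval : ∀ a b, aux a b = 0 ∨ aux a b = 1 ∨ aux a b = -1) : SignedGraph (Fin n) :=
  ofSign (fun i j => aux (min i.val j.val) (max i.val j.val))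
    (fun i j => by
      show aux (min i.val j.val) (max i.val j.val) = aux (min j.val i.val) (max j.val i.val)
      rw [min_comm, max_comm])
    (fun i => by
      show aux (min i.val i.val) (max i.val i.val) = 0
      rw [min_self, max_self, h0])
    (fun i j => hval _ _)

def gammaNAux : ℕ → ℕ → ℤ := fun a b =>
  if a = b then 0
  else if a = 0 ∧ b = 1 then -1
  else if a = 0 ∧ b = 2 then 1
  else if a = 1 ∧ b = 3 then 1
  else if 2 ≤ a ∧ a < b ∧ ¬(a = 2 ∧ b = 3) then 1
  else 0

/-- The signed graph `Γₙ`: a copy of `K_{n-2}` (on `{2, …, n-1}`) with the edge `{2,3}`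
removed, together with two new vertices `0, 1` and edges `{0,1}` (negative),
`{0,2}` and `{1,3}` (positive); all other edges positive. -/
def GammaN (n : ℕ) : SignedGraph (Fin n) :=
  ofMinMaxAux n gammaNAux (fun a => by simp [gammaNAux])
    (fun a b => by unfold gammaNAux; split_ifs <;> simp)

def gammaNTauAux (τ : ℕ) : ℕ → ℕ → ℤ := fun a b =>
  if a = b then 0
  else if a = 0 ∧ b = 1 then -1
  else if a = 0 ∧ b = 3 then 1
  else if a = 0 ∧ 4 ≤ b ∧ b ≤ τ + 3 then 1
  else if a = 1 ∧ b = 2 then 1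
  else if a = 2 ∧ τ + 4 ≤ b then 1
  else if a = 3 ∧ 4 ≤ b then 1
  else if 4 ≤ a ∧ a < b then 1
  else 0

/-- The signed graph `Γ_{n,τ}`: here `v₁ = 0`, `v₂ = 1`, `v₃ = 2`, `v₅ = 3`,
`X = {4, …, τ+3}`, `Y = {τ+4, …, n-1}` (with `v₄ = τ+4 ∈ Y`); the edge `{0,1}` is the
unique negative edge. -/
def GammaNTau (n τ : ℕ) : SignedGraph (Fin n) :=
  ofMinMaxAux n (gammaNTauAux τ) (fun a => by simp [gammaNTauAux])
    (fun a b => by unfold gammaNTauAux; split_ifs <;> simp)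

/-- The negation `-Γ` of a signed graph. -/
def neg (Γ : SignedGraph V) : SignedGraph V where
  G := Γ.G
  sign := fun u v => - Γ.sign u v
  sign_symm := fun u v => by
    show -Γ.sign u v = -Γ.sign v u
    rw [Γ.sign_symm]
  sign_mem := fun u v h => by
    show -Γ.sign u v = 1 ∨ -Γ.sign u v = -1
    rcases Γ.sign_mem u v h with h' | h' <;> simp [h']
  sign_not := fun u v h => by
    show -Γ.sign u v = 0
    simp [Γ.sign_not u v h]

/-- The induced signed subgraph on a set of vertices. -/
def induce (Γ : SignedGraph V) (S : Set V) : SignedGraph S where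
  G := { Adj := fun u v => Γ.G.Adj u v
         symm := ⟨fun u v h => Γ.G.symm.symm _ _ h⟩
         loopless := ⟨fun u h => Γ.G.loopless.irrefl _ h⟩ }
  sign := fun u v => Γ.sign u v
  sign_symm := fun u v => Γ.sign_symm u v
  sign_mem := fun u v h => Γ.sign_mem u v h
  sign_not := fun u v h => Γ.sign_not u v h

/-- `S` is a balanced clique of `Γ`: it induces a complete subgraph which is balanced. -/
def IsBalancedClique [DecidableEq V] (Γ : SignedGraph V) (S : Finset V) : Prop :=
  (∀ u ∈ S, ∀ v ∈ S, u ≠ v → Γ.G.Adj u v) ∧ (Γ.induce (S : Set V)).Balanced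

end SignedGraph


section GammaNHelpers
open SignedGraph SimpleGraph

variable {n : ℕ}

lemma gamma_sign (i j : Fin n) :
    (GammaN n).sign i j = gammaNAux (min i.val j.val) (max i.val j.val) := rfl

lemma gamma_adj (i j : Fin n) :
    (GammaN n).G.Adj i j ↔ gammaNAux (min i.val j.val) (max i.val j.val) ≠ 0 := Iff.rfl

lemma adjQ {i j : Fin n} (h : (GammaN n).G.Adj i j) :
    i.val ≠ j.val ∧ ((min i.val j.val = 0 ∧ max i.val j.val ≤ 2) ∨
      (min i.val j.val = 1 ∧ max i.val j.val = 3) ∨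
      (2 ≤ min i.val j.val ∧ ¬(min i.val j.val = 2 ∧ max i.val j.val = 3))) := by
  rw [gamma_adj] at h
  unfold gammaNAux at h
  split_ifs at h <;> omega

lemma negQ {i j : Fin n} (h : (GammaN n).sign i j = -1) :
    (i.val = 0 ∧ j.val = 1) ∨ (i.val = 1 ∧ j.val = 0) := by
  rw [gamma_sign] at h
  unfold gammaNAux at h
  split_ifs at h <;> omega
lemma gadj (a b : ℕ) (ha : a < n) (hb : b < n) (h : gammaNAux (min a b) (max a b) ≠ 0) :
    (GammaN n).G.Adj ⟨a, ha⟩ ⟨b, hb⟩ := h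

lemma negCycle5 (hn : 5 ≤ n) : (GammaN n).HasNegCycleOfLength 5 := by
  have h0 : (0:ℕ) < n := by omega
  have h1 : (1:ℕ) < n := by omega
  have h2 : (2:ℕ) < n := by omega
  have h3 : (3:ℕ) < n := by omega
  have h4 : (4:ℕ) < n := by omega
  refine ⟨⟨0,h0⟩, .cons (gadj 0 1 h0 h1 (by decide))
    (.cons (gadj 1 3 h1 h3 (by decide)) (.cons (gadj 3 4 h3 h4 (by decide))
    (.cons (gadj 4 2 h4 h2 (by decide)) (.cons (gadj 2 0 h2 h0 (by decide)) .nil)))), ?_, ?_, ?_⟩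
  · constructor
    · constructor
      · rw [Walk.isTrail_def]
        simp [Fin.ext_iff]
      · simp
    · simp [Fin.ext_iff]
  · show gammaNAux (min 0 1) (max 0 1) * (gammaNAux (min 1 3) (max 1 3) *
      (gammaNAux (min 3 4) (max 3 4) * (gammaNAux (min 4 2) (max 4 2) *
      (gammaNAux (min 2 0) (max 2 0) * 1)))) = -1
    decide
  · simp
lemma key {i j : Fin n} (h : (GammaN n).G.Adj i j) :
    (GammaN n).sign i j = 1 ∨ ((i.val = 0 ∧ j.val = 1) ∨ (i.val = 1 ∧ j.val = 0)) := by
  rcases (GammaN n).sign_mem i j h with hs | hs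
  · exact Or.inl hs
  · exact Or.inr (negQ hs)

lemma noNeg3 : ¬ (GammaN n).HasNegCycleOfLength 3 := by
  rintro ⟨u, w, hc, hs, hl⟩
  cases w with
  | nil => simp at hl
  | cons h1 p =>
    cases p with
    | nil => simp at hl
    | cons h2 q =>
      cases q with
      | nil => simp at hl
      | cons h3 r =>
        cases r with
        | cons h4 r' => simp at hl
        | nil =>
          have hnd := hc.support_nodup
          simp [Fin.ext_iff] at hnd
          have q1 := adjQ h1
          have q2 := adjQ h2
          have q3 := adjQ h3
          simp only [SignedGraph.walkSign] at hs
          rcases key h1 with s1 | p1 <;> rcases key h2 with s2 | p2 <;>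
            rcases key h3 with s3 | p3 <;>
            first
              | omega
              | (rw [s1, s2, s3] at hs; norm_num at hs)
lemma noNeg4 : ¬ (GammaN n).HasNegCycleOfLength 4 := by
  rintro ⟨u, w, hc, hs, hl⟩
  cases w with
  | nil => simp at hl
  | cons h1 p =>
  cases p with
  | nil => simp at hl
  | cons h2 q =>
  cases q with
  | nil => simp at hl
  | cons h3 r =>
  cases r with
  | nil => simp at hl
  | cons h4 t =>
  cases t with
  | cons h5 t' => simp at hl
  | nil =>
    have hnd := hc.support_nodup
    simp [Fin.ext_iff] at hnd
    have q1 := adjQ h1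
    have q2 := adjQ h2
    have q3 := adjQ h3
    have q4 := adjQ h4
    simp only [SignedGraph.walkSign] at hs
    rcases key h1 with s1 | p1 <;> rcases key h2 with s2 | p2 <;>
      rcases key h3 with s3 | p3 <;> rcases key h4 with s4 | p4 <;>
      first
        | omega
        | (rw [s1, s2, s3, s4] at hs; norm_num at hs)

end GammaNHelpers

open SignedGraph in
/-- For every `n ≥ 5`, the signed graph `Γₙ` is unbalanced, contains no negative
3-cycle and no negative 4-cycle; indeed every negative cycle of `Γₙ` has length at least 5,
and `Γₙ` has a negative cycle of length exactly 5 (so its negative cycles of minimum length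
have length 5). -/
theorem GammaN_unbalanced_C34free (n : ℕ) (hn : 5 ≤ n) :
    (GammaN n).Unbalanced ∧
    ¬ (GammaN n).HasNegCycleOfLength 3 ∧
    ¬ (GammaN n).HasNegCycleOfLength 4 ∧
    (GammaN n).HasNegCycleOfLength 5 ∧
    (∀ (u : Fin n) (w : (GammaN n).G.Walk u u), w.IsCycle → (GammaN n).walkSign w = -1 →
      5 ≤ w.length) := by
  refine ⟨?_, noNeg3, noNeg4, negCycle5 hn, ?_⟩
  · intro hb
    obtain ⟨u, w, hc, hs, hl⟩ := negCycle5 (n := n) hn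
    have := hb u w hc
    omega
  · intro u w hc hs
    have h3 := hc.three_le_length
    by_contra h
    rcases (by omega : w.length = 3 ∨ w.length = 4) with h' | h'
    · exact noNeg3 ⟨u, w, hc, hs, h'⟩
    · exact noNeg4 ⟨u, w, hc, hs, h'⟩
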